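/- For every real number d > e, the map F(x) = exp(−d·exp(−d·x)) has a fixed point in [0, 1] that is strictly smaller than the unique fixed point of the map x ↦ exp(−d·x). -/

import Mathlib

/-- For `d > e`, the map `F x = exp (−d exp (−d x))` has a fixed point in
`[0, 1]` strictly smaller than the unique fixed point of `x ↦ exp (−d x)`. -/
theorem stmt6 (d : ℝ) (hd : Real.exp 1 < d) :
    ∀ x : ℝ, Real.exp (-d * x) = x →
      ∃ y ∈ Set.Icc (0 : ℝ) 1, Real.exp (-d * Real.exp (-d * y)) = y ∧ y < x := by
  intro x hx
  have hd0 : 0 < d := lt_trans (Real.exp_pos 1) hd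
  have hx0 : 0 < x := hx ▸ Real.exp_pos _
  have hx1 : x < 1 := by
    rw [← hx, Real.exp_lt_one_iff]; nlinarith
  have he1 : Real.exp 1 * Real.exp (-1) = 1 := by
    rw [← Real.exp_add]; simp
  have hdx : 1 < d * x := by
    by_contra h
    push_neg at h
    have h2 : Real.exp (-1) ≤ x := by
      rw [← hx]; exact Real.exp_le_exp.mpr (by linarith)
    nlinarith [mul_le_mul_of_nonneg_left h2 (le_of_lt hd0), Real.exp_pos (-1)]
  set g : ℝ → ℝ := fun y => Real.exp (-d * Real.exp (-d * y)) - y with hg_def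
  have hgx : g x = 0 := by
    simp only [hg_def, hx]; simp
  -- derivative of g at x
  have hderiv : HasDerivAt g ((d * x) ^ 2 - 1) x := by
    have h1 : HasDerivAt (fun y : ℝ => -d * y) (-d * 1) x := (hasDerivAt_id x).const_mul (-d)
    have h2 := h1.exp
    have h3 := (h2.const_mul (-d)).exp
    have h4 := h3.sub (hasDerivAt_id x)
    refine h4.congr_deriv ?_
    rw [hx, hx]
    ring
  have hpos : 0 < (d * x) ^ 2 - 1 := by nlinarith
  have hslope := hasDerivAt_iff_tendsto_slope.mp hderiv
  have hslope' : Filter.Tendsto (slope g x) (nhdsWithin x (Set.Iio x)) (nhds ((d * x) ^ 2 - 1)) :=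
    hslope.mono_left (nhdsWithin_mono x (fun y hy => ne_of_lt hy))
  have hev : ∀ᶠ y in nhdsWithin x (Set.Iio x), 0 < slope g x y :=
    hslope' (Ioi_mem_nhds hpos)
  have hev2 : ∀ᶠ y in nhdsWithin x (Set.Iio x), y ∈ Set.Ioo 0 x :=
    Ioo_mem_nhdsLT hx0
  obtain ⟨y0, hsl, hy0⟩ := (hev.and hev2).exists
  have hy0x : y0 < x := hy0.2
  have hgy0 : g y0 < 0 := by
    have hden : y0 - x < 0 := by linarith
    rw [slope_def_field, hgx, sub_zero, div_pos_iff] at hsl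
    rcases hsl with ⟨h1, h2⟩ | ⟨h1, h2⟩
    · linarith
    · exact h1
  have hg0 : 0 < g 0 := by
    simp only [hg_def]
    have : Real.exp (-d * Real.exp (-d * 0)) > 0 := Real.exp_pos _
    simpa using this
  have hcont : ContinuousOn g (Set.Icc 0 y0) := by fun_prop
  have hivt := intermediate_value_Icc' (le_of_lt hy0.1) hcont
  have h0mem : (0 : ℝ) ∈ Set.Icc (g y0) (g 0) := ⟨le_of_lt hgy0, le_of_lt hg0⟩
  obtain ⟨y, hymem, hgy⟩ := hivt h0mem
  refine ⟨y, ⟨hymem.1, ?_⟩, ?_, ?_⟩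
  · linarith [hymem.2]
  · have : Real.exp (-d * Real.exp (-d * y)) - y = 0 := hgy
    linarith
  · linarith [hymem.2]
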